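/- Let A be a real symmetric n×n matrix with eigenvalues λ_1 < λ_2 ≤ ... ≤ λ_n, and let f(x) = (1/2) x^T A x restricted to the unit sphere S^{n-1}. Then the minimizer of f on the sphere is a unit eigenvector v* for λ_1, and the condition number of the (geodesic) Hessian of f at v*, i.e. the ratio of the largest to smallest values of (d²/dt²)|_{t=0} f(exp_{v*}(t u)) over unit tangent vectors u, equals (λ_n − λ_1)/(λ_2 − λ_1). -/

import Mathlib

open Matrix

/-- The Euclidean dot product on `Fin n → ℝ`. -/
noncomputable def dotp {n : ℕ} (v w : Fin n → ℝ) : ℝ := ∑ i, v i * w i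

/-- Euclidean norm of a vector. -/
noncomputable def enorm' {n : ℕ} (v : Fin n → ℝ) : ℝ := Real.sqrt (dotp v v)

lemma dotp_comm {n : ℕ} (x y : Fin n → ℝ) : dotp x y = dotp y x := by
  simp [dotp, mul_comm]

lemma dotp_smul_right {n : ℕ} (a : ℝ) (x y : Fin n → ℝ) : dotp x (a • y) = a * dotp x y := by
  simp [dotp, Finset.mul_sum, mul_left_comm]

lemma dotp_smul_left {n : ℕ} (a : ℝ) (x y : Fin n → ℝ) : dotp (a • x) y = a * dotp x y := by
  simp [dotp, Finset.mul_sum, mul_assoc]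

lemma dotp_add_right {n : ℕ} (x y z : Fin n → ℝ) : dotp x (y + z) = dotp x y + dotp x z := by
  simp [dotp, mul_add, Finset.sum_add_distrib]

lemma dotp_add_left {n : ℕ} (x y z : Fin n → ℝ) : dotp (x + y) z = dotp x z + dotp y z := by
  simp [dotp, add_mul, Finset.sum_add_distrib]

lemma dotp_sum_right {n : ℕ} (x : Fin n → ℝ) (s : Finset (Fin n)) (y : Fin n → Fin n → ℝ) :
    dotp x (∑ i ∈ s, y i) = ∑ i ∈ s, dotp x (y i) := by
  simp only [dotp, Finset.sum_apply, Finset.mul_sum]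
  exact Finset.sum_comm

lemma dotp_mulVec_symm {n : ℕ} (A : Matrix (Fin n) (Fin n) ℝ) (hA : A.IsSymm)
    (x y : Fin n → ℝ) : dotp x (A.mulVec y) = dotp (A.mulVec x) y := by
  simp only [dotp, Matrix.mulVec, dotProduct, Finset.mul_sum, Finset.sum_mul]
  rw [Finset.sum_comm]
  refine Finset.sum_congr rfl fun i _ => Finset.sum_congr rfl fun j _ => ?_
  have h : A j i = A i j := by
    conv_lhs => rw [← hA]
    rfl
  rw [h]; ring

lemma col_orth {n : ℕ} (v : Fin n → Fin n → ℝ)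
    (horth : ∀ i j, dotp (v i) (v j) = if i = j then 1 else 0) (k j : Fin n) :
    ∑ i, v i k * v i j = if k = j then 1 else 0 := by
  have h1 : (Matrix.of v) * (Matrix.of v)ᵀ = 1 := by
    ext i j
    simpa [Matrix.mul_apply, dotp, Matrix.one_apply] using horth i j
  have h2 : (Matrix.of v)ᵀ * (Matrix.of v) = 1 := mul_eq_one_comm.mp h1
  have := congrFun (congrFun h2 k) j
  simpa [Matrix.mul_apply, Matrix.one_apply] using this

lemma repr_eq {n : ℕ} (v : Fin n → Fin n → ℝ)
    (horth : ∀ i j, dotp (v i) (v j) = if i = j then 1 else 0) (x : Fin n → ℝ) :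
    x = ∑ i, dotp x (v i) • v i := by
  funext j
  rw [Finset.sum_apply]
  have : ∀ i, (dotp x (v i) • v i) j = ∑ k, x k * v i k * v i j := by
    intro i
    simp [dotp, Finset.sum_mul]
  simp only [this]
  rw [Finset.sum_comm]
  have : ∀ k, ∑ i, x k * v i k * v i j = x k * (if k = j then 1 else 0) := by
    intro k
    rw [← col_orth v horth k j, Finset.mul_sum]
    exact Finset.sum_congr rfl fun i _ => by ring
  simp only [this]
  simp

lemma dotp_self_expand {n : ℕ} (v : Fin n → Fin n → ℝ)
    (horth : ∀ i j, dotp (v i) (v j) = if i = j then 1 else 0) (x : Fin n → ℝ) :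
    dotp x x = ∑ i, dotp x (v i) ^ 2 := by
  nth_rewrite 2 [repr_eq v horth x]
  rw [dotp_sum_right]
  exact Finset.sum_congr rfl fun i _ => by rw [dotp_smul_right]; ring

lemma dotp_A_expand {n : ℕ} (A : Matrix (Fin n) (Fin n) ℝ) (lam : Fin n → ℝ)
    (v : Fin n → Fin n → ℝ)
    (horth : ∀ i j, dotp (v i) (v j) = if i = j then 1 else 0)
    (heig : ∀ i, A.mulVec (v i) = lam i • v i) (x : Fin n → ℝ) :
    dotp x (A.mulVec x) = ∑ i, lam i * dotp x (v i) ^ 2 := by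
  have hx := repr_eq v horth x
  have hmv : A.mulVec x = ∑ i, dotp x (v i) • (lam i • v i) := by
    conv_lhs => rw [hx]
    rw [show A.mulVec (∑ i, dotp x (v i) • v i)
        = ∑ i, dotp x (v i) • A.mulVec (v i) by
      simp [Matrix.mulVec_sum, Matrix.mulVec_smul]]
    exact Finset.sum_congr rfl fun i _ => by rw [heig]
  rw [hmv, dotp_sum_right]
  refine Finset.sum_congr rfl fun i _ => ?_
  rw [dotp_smul_right, dotp_smul_right]; ring

lemma hess_calc (a b : ℝ) :
    iteratedDeriv 2 (fun t : ℝ => a + b * Real.cos (2 * t)) 0 = -(4 * b) := by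
  have h2t : ∀ t : ℝ, HasDerivAt (fun t : ℝ => 2 * t) 2 t := fun t => by
    simpa using (hasDerivAt_id t).const_mul (2 : ℝ)
  have hcos : ∀ t : ℝ, HasDerivAt (fun t : ℝ => Real.cos (2 * t)) (-Real.sin (2 * t) * 2) t :=
    fun t => (Real.hasDerivAt_cos (2 * t)).comp t (h2t t)
  have hd1 : deriv (fun t : ℝ => a + b * Real.cos (2 * t))
      = fun t : ℝ => b * (-Real.sin (2 * t) * 2) := by
    funext t
    exact (((hcos t).const_mul b).const_add a).deriv
  have hsin : HasDerivAt (fun t : ℝ => Real.sin (2 * t)) (Real.cos (2 * 0) * 2) 0 :=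
    (Real.hasDerivAt_sin (2 * 0)).comp 0 (h2t 0)
  have hd2 : HasDerivAt (fun t : ℝ => b * (-Real.sin (2 * t) * 2))
      (b * (-(Real.cos (2 * 0) * 2) * 2)) 0 := ((hsin.neg).mul_const 2).const_mul b
  rw [iteratedDeriv_succ, iteratedDeriv_one, hd1, hd2.deriv]
  norm_num; ring

theorem stmt17 {n : ℕ} (hn : 2 ≤ n)
    (A : Matrix (Fin n) (Fin n) ℝ) (hA : A.IsSymm)
    (lam : Fin n → ℝ) (v : Fin n → Fin n → ℝ)
    (horth : ∀ i j, dotp (v i) (v j) = if i = j then 1 else 0)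
    (heig : ∀ i, A.mulVec (v i) = lam i • v i)
    (hmono : Monotone lam)
    (hsimple : lam ⟨0, by omega⟩ < lam ⟨1, by omega⟩)
    (f : (Fin n → ℝ) → ℝ)
    (hf : ∀ x, f x = (1 / 2) * dotp x (A.mulVec x))
    (Hess : (Fin n → ℝ) → ℝ)
    (hHess : ∀ u, Hess u = iteratedDeriv 2
      (fun t : ℝ => f (Real.cos t • v ⟨0, by omega⟩ + Real.sin t • u)) 0) :
    (∀ x : Fin n → ℝ, enorm' x = 1 → f (v ⟨0, by omega⟩) ≤ f x) ∧
      (⨆ u : {u : Fin n → ℝ // dotp u (v ⟨0, by omega⟩) = 0 ∧ enorm' u = 1}, Hess u)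
        / (⨅ u : {u : Fin n → ℝ // dotp u (v ⟨0, by omega⟩) = 0 ∧ enorm' u = 1}, Hess u)
      = (lam ⟨n - 1, by omega⟩ - lam ⟨0, by omega⟩)
        / (lam ⟨1, by omega⟩ - lam ⟨0, by omega⟩) := by
  have h0 : 0 < n := by omega
  have h1 : 1 < n := by omega
  have hN : n - 1 < n := by omega
  set i0 : Fin n := ⟨0, h0⟩ with hi0def
  set i1 : Fin n := ⟨1, h1⟩ with hi1def
  set iN : Fin n := ⟨n - 1, hN⟩ with hiNdef
  have hvnorm : ∀ i : Fin n, enorm' (v i) = 1 := fun i => by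
    simp [enorm', horth i i]
  have hnorm_one : ∀ x : Fin n → ℝ, enorm' x = 1 → dotp x x = 1 := fun x hx =>
    Real.sqrt_eq_one.mp hx
  have hvAv : ∀ i : Fin n, dotp (v i) (A.mulVec (v i)) = lam i := by
    intro i
    rw [heig, dotp_smul_right, horth]
    simp
  constructor
  · -- minimality of f at v i0
    intro x hx
    show f (v i0) ≤ f x
    have hx1 : dotp x x = 1 := hnorm_one x hx
    have hsum : ∑ i, dotp x (v i) ^ 2 = 1 := by
      rw [← dotp_self_expand v horth x]; exact hx1
    have e2 := dotp_A_expand A lam v horth heig x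
    rw [hf, hf, hvAv, e2]
    have hle : lam i0 ≤ ∑ i, lam i * dotp x (v i) ^ 2 := by
      calc lam i0 = ∑ i, lam i0 * dotp x (v i) ^ 2 := by
            rw [← Finset.mul_sum, hsum, mul_one]
        _ ≤ ∑ i, lam i * dotp x (v i) ^ 2 :=
            Finset.sum_le_sum fun i _ =>
              mul_le_mul_of_nonneg_right (hmono (Fin.le_def.mpr (Nat.zero_le _))) (sq_nonneg _)
    linarith
  · -- condition number of the Hessian
    have hq : ∀ u : Fin n → ℝ, dotp u (v i0) = 0 →
        Hess u = dotp u (A.mulVec u) - lam i0 := by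
      intro u hu
      have hu' : dotp (v i0) u = 0 := by rw [dotp_comm]; exact hu
      have hAu : dotp (v i0) (A.mulVec u) = 0 := by
        rw [dotp_mulVec_symm A hA, heig, dotp_smul_left, hu']
        ring
      have hv00 : dotp (v i0) (v i0) = 1 := by rw [horth]; simp
      rw [hHess]
      have hfun : (fun t : ℝ => f (Real.cos t • v i0 + Real.sin t • u))
          = fun t : ℝ => (lam i0 + dotp u (A.mulVec u)) / 4
              + ((lam i0 - dotp u (A.mulVec u)) / 4) * Real.cos (2 * t) := by
        funext t
        rw [hf]
        have hAc : A.mulVec (Real.cos t • v i0 + Real.sin t • u)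
            = Real.cos t • (lam i0 • v i0) + Real.sin t • A.mulVec u := by
          rw [Matrix.mulVec_add, Matrix.mulVec_smul, Matrix.mulVec_smul, heig]
        rw [hAc]
        simp only [dotp_add_left, dotp_add_right, dotp_smul_left, dotp_smul_right,
          hv00, hu, hu', hAu, mul_zero, mul_one, add_zero, zero_add]
        have hc := Real.cos_sq t
        have hs := Real.sin_sq t
        linear_combination ((lam i0 - dotp u (A.mulVec u)) / 2) * hc
          + (dotp u (A.mulVec u) / 2) * hs
      rw [hfun, hess_calc]
      ring
    have hbound : ∀ u : Fin n → ℝ, dotp u (v i0) = 0 → enorm' u = 1 →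
        lam i1 - lam i0 ≤ Hess u ∧ Hess u ≤ lam iN - lam i0 := by
      intro u hu hnorm
      rw [hq u hu]
      have hsum : ∑ i, dotp u (v i) ^ 2 = 1 := by
        rw [← dotp_self_expand v horth u]; exact hnorm_one u hnorm
      have e2 := dotp_A_expand A lam v horth heig u
      constructor
      · have hle : ∑ i, lam i1 * dotp u (v i) ^ 2 ≤ ∑ i, lam i * dotp u (v i) ^ 2 := by
          refine Finset.sum_le_sum fun i _ => ?_
          by_cases h : i = i0
          · have hc0 : dotp u (v i) = 0 := by rw [h]; exact hu
            rw [hc0]; simp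
          · refine mul_le_mul_of_nonneg_right (hmono ?_) (sq_nonneg _)
            have hne : i.val ≠ 0 := fun hh => h (Fin.ext hh)
            rw [Fin.le_def]; show 1 ≤ i.val
            omega
        rw [← Finset.mul_sum, hsum, mul_one] at hle
        rw [e2]; linarith
      · have hle : ∑ i, lam i * dotp u (v i) ^ 2 ≤ ∑ i, lam iN * dotp u (v i) ^ 2 := by
          refine Finset.sum_le_sum fun i _ => ?_
          refine mul_le_mul_of_nonneg_right (hmono ?_) (sq_nonneg _)
          rw [Fin.le_def]; show i.val ≤ n - 1
          omega
        rw [← Finset.mul_sum, hsum, mul_one] at hle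
        rw [e2]; linarith
    have htang : ∀ i : Fin n, i ≠ i0 → dotp (v i) (v i0) = 0 := by
      intro i hi
      rw [horth]
      simp [hi]
    have hne1 : i1 ≠ i0 := by simp [hi1def, hi0def, Fin.ext_iff]
    have hneN : iN ≠ i0 := by simp [hiNdef, hi0def, Fin.ext_iff]; omega
    have hHvi : ∀ i : Fin n, i ≠ i0 → Hess (v i) = lam i - lam i0 := by
      intro i hi
      rw [hq (v i) (htang i hi), hvAv]
    set S := {u : Fin n → ℝ // dotp u (v i0) = 0 ∧ enorm' u = 1} with hSdef
    haveI : Nonempty S := ⟨⟨v i1, htang i1 hne1, hvnorm i1⟩⟩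
    have hbddA : BddAbove (Set.range fun u : S => Hess ↑u) := by
      refine ⟨lam iN - lam i0, ?_⟩
      rintro y ⟨u, rfl⟩
      exact (hbound u u.2.1 u.2.2).2
    have hbddB : BddBelow (Set.range fun u : S => Hess ↑u) := by
      refine ⟨lam i1 - lam i0, ?_⟩
      rintro y ⟨u, rfl⟩
      exact (hbound u u.2.1 u.2.2).1
    have hsup : (⨆ u : S, Hess ↑u) = lam iN - lam i0 := by
      apply le_antisymm
      · exact ciSup_le fun u => (hbound u u.2.1 u.2.2).2
      · have hle := le_ciSup hbddA (⟨v iN, htang iN hneN, hvnorm iN⟩ : S)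
        rwa [hHvi iN hneN] at hle
    have hinf : (⨅ u : S, Hess ↑u) = lam i1 - lam i0 := by
      apply le_antisymm
      · have hle := ciInf_le hbddB (⟨v i1, htang i1 hne1, hvnorm i1⟩ : S)
        rwa [hHvi i1 hne1] at hle
      · exact le_ciInf fun u => (hbound u u.2.1 u.2.2).1
    show (⨆ u : S, Hess ↑u) / (⨅ u : S, Hess ↑u)
        = (lam iN - lam i0) / (lam i1 - lam i0)
    rw [hsup, hinf]
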